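/- Let A be a symmetric positive semidefinite d×d matrix, s > 0, p ≥ 2, b ∈ ℝ^d, and x⋆ the unique solution of Ax + s‖x‖^{p−2}x = b. Then x⋆ lies in the Krylov subspace span{b, A b, A² b, …, A^{d−1} b}. -/

import Mathlib

open Matrix

/-- The solution of the regularized quadratic problem lies in the Krylov subspace
`span{b, Ab, …, A^{d−1}b}`. -/
theorem stmt15 {d : ℕ} (A : Matrix (Fin d) (Fin d) ℝ) (hA : A.PosSemidef)
    (b : EuclideanSpace ℝ (Fin d)) (p s : ℝ) (hp : 2 ≤ p) (hs : 0 < s)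
    (xs : EuclideanSpace ℝ (Fin d))
    (hstar : (EuclideanSpace.equiv (Fin d) ℝ).symm (A.mulVec xs)
      + (s * ‖xs‖ ^ (p - 2)) • xs = b) :
    xs ∈ Submodule.span ℝ
      (Set.range fun i : Fin d =>
        (EuclideanSpace.equiv (Fin d) ℝ).symm ((A ^ (i : ℕ)).mulVec b)) := by
  rcases Nat.eq_zero_or_pos d with hd | hd
  · subst hd
    have : xs = 0 := Subsingleton.elim _ _
    rw [this]; exact Submodule.zero_mem _
  rcases eq_or_ne xs 0 with hxs | hxs
  · rw [hxs]; exact Submodule.zero_mem _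
  set c : ℝ := s * ‖xs‖ ^ (p - 2) with hc
  have hc0 : 0 < c := by
    apply mul_pos hs
    apply Real.rpow_pos_of_pos
    simpa using hxs
  -- move to the plain pi world
  set x0 : Fin d → ℝ := (EuclideanSpace.equiv (Fin d) ℝ) xs with hx0
  set b0 : Fin d → ℝ := (EuclideanSpace.equiv (Fin d) ℝ) b with hb0
  set T : Submodule ℝ (Fin d → ℝ) :=
    Submodule.span ℝ (Set.range fun i : Fin d => (A ^ (i : ℕ)).mulVec b0) with hT
  suffices hmemT : x0 ∈ T by
    have h := Submodule.mem_map_of_mem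
      (f := ((EuclideanSpace.equiv (Fin d) ℝ).symm.toLinearEquiv.toLinearMap)) hmemT
    rw [Submodule.map_span, ← Set.range_comp] at h
    exact h
  have hstar0 : A.mulVec x0 + c • x0 = b0 := by
    have := congrArg WithLp.ofLp hstar; simp at this; exact this
  -- the linear map taking a matrix to M *ᵥ b0
  set φ : Matrix (Fin d) (Fin d) ℝ →ₗ[ℝ] (Fin d → ℝ) :=
    { toFun := fun M => M.mulVec b0
      map_add' := fun M N => Matrix.add_mulVec M N b0
      map_smul' := fun r M => Matrix.smul_mulVec r M b0 } with hφ
  -- every polynomial in A applied to b0 lies in T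
  have key : ∀ q : Polynomial ℝ, (Polynomial.aeval A q).mulVec b0 ∈ T := by
    intro q
    have hmod : Polynomial.aeval A q = Polynomial.aeval A (q %ₘ A.charpoly) := by
      conv_lhs => rw [← Polynomial.modByMonic_add_div q A.charpoly]
      simp [Matrix.aeval_self_charpoly]
    have hne : A.charpoly ≠ 1 := by
      intro h
      have h2 := A.charpoly_natDegree_eq_dim
      rw [h] at h2
      simp at h2
      omega
    have hdeg : (q %ₘ A.charpoly).natDegree < d := by
      have := Polynomial.natDegree_modByMonic_lt q A.charpoly_monic hne
      rwa [A.charpoly_natDegree_eq_dim, Fintype.card_fin] at this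
    rw [hmod, Polynomial.aeval_eq_sum_range' hdeg]
    show φ (∑ i ∈ Finset.range d, (q %ₘ A.charpoly).coeff i • A ^ i) ∈ T
    rw [map_sum]
    apply Submodule.sum_mem
    intro i hi
    show ((q %ₘ A.charpoly).coeff i • A ^ i).mulVec b0 ∈ T
    rw [Matrix.smul_mulVec]
    apply Submodule.smul_mem
    apply Submodule.subset_span
    exact ⟨⟨i, Finset.mem_range.mp hi⟩, rfl⟩
  -- the linear map g = A + c • id
  set g : (Fin d → ℝ) →ₗ[ℝ] (Fin d → ℝ) := A.mulVecLin + c • LinearMap.id with hg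
  have hgapp : ∀ v : Fin d → ℝ, g v = A.mulVec v + c • v := fun v => rfl
  -- g is injective
  have hg_inj : Function.Injective g := by
    rw [← LinearMap.ker_eq_bot, LinearMap.ker_eq_bot']
    intro v hv
    have h1 : A.mulVec v + c • v = 0 := by rw [← hgapp]; exact hv
    have h2 : v ⬝ᵥ A.mulVec v + c * (v ⬝ᵥ v) = 0 := by
      have := congrArg (fun w => v ⬝ᵥ w) h1
      simpa [dotProduct_add, dotProduct_smul, smul_eq_mul] using this
    have h3 : 0 ≤ v ⬝ᵥ A.mulVec v := by simpa using hA.dotProduct_mulVec_nonneg v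
    have h4 : 0 ≤ v ⬝ᵥ v := Finset.sum_nonneg fun i _ => mul_self_nonneg _
    have h5 : v ⬝ᵥ v = 0 := by nlinarith
    exact dotProduct_self_eq_zero.mp h5
  -- T is invariant under g
  have hTinv : ∀ v ∈ T, g v ∈ T := by
    intro v hv
    induction hv using Submodule.span_induction with
    | mem x hx =>
      obtain ⟨i, rfl⟩ := hx
      rw [hgapp]
      have heq : A.mulVec ((A ^ (i : ℕ)).mulVec b0) + c • ((A ^ (i : ℕ)).mulVec b0)
          = (Polynomial.aeval A
              (Polynomial.X ^ ((i : ℕ) + 1) + Polynomial.C c * Polynomial.X ^ (i : ℕ))).mulVec b0 := by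
        rw [map_add, _root_.map_mul, Polynomial.aeval_X_pow, Polynomial.aeval_X_pow, Polynomial.aeval_C,
          Matrix.add_mulVec, Matrix.mulVec_mulVec, ← pow_succ']
        congr 1
        rw [Algebra.algebraMap_eq_smul_one, smul_mul_assoc, one_mul, Matrix.smul_mulVec]
      rw [heq]
      exact key _
    | zero => simpa using Submodule.zero_mem T
    | add x y hx hy ihx ihy => rw [map_add]; exact Submodule.add_mem T ihx ihy
    | smul r x hx ih => rw [_root_.map_smul]; exact Submodule.smul_mem T r ih
  -- b0 ∈ T
  have hb : b0 ∈ T := by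
    apply Submodule.subset_span
    exact ⟨⟨0, hd⟩, by simp [Matrix.one_mulVec]⟩
  -- restrict g to T; injective, hence surjective
  set f : T →ₗ[ℝ] T := g.restrict hTinv with hf
  have hf_inj : Function.Injective f := by
    intro u v huv
    apply Subtype.ext
    apply hg_inj
    have := congrArg (Subtype.val) huv
    simpa [hf, LinearMap.restrict_apply] using this
  have hf_surj : Function.Surjective f := LinearMap.injective_iff_surjective.mp hf_inj
  obtain ⟨y, hy⟩ := hf_surj ⟨b0, hb⟩
  have hgy : g y = b0 := by
    have := congrArg (Subtype.val) hy
    simpa [hf, LinearMap.restrict_apply] using this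
  have hgx : g x0 = b0 := by rw [hgapp]; exact hstar0
  have : (y : Fin d → ℝ) = x0 := hg_inj (by rw [hgy, hgx])
  rw [← this]
  exact y.2
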